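/- arXiv:quant-ph/0608026 — 8 statements merged into one kernel-verified Lean document; each statement's English description precedes it below -/
import Mathlib

section
/- Every singular value of the discriminant matrix D(P) lies in the interval [0,1]. Equivalently, D(P) is a contraction in Euclidean norm: for every vector v : X → ℝ one has ‖D(P) · v‖ ≤ ‖v‖, where ‖·‖ is the Euclidean norm and D(P) · v denotes matrix-vector multiplication. -/
/-- The discriminant matrix `D(P)` of a row-stochastic matrix `P`
with stationary distribution `π` is a contraction in Euclidean norm:
for every `v : X → ℝ`, `‖D(P) · v‖ ≤ ‖v‖`. -/
theorem discriminant_contraction {X : Type*} [Fintype X] [Nonempty X]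
    (P : Matrix X X ℝ) (pi : X → ℝ)
    (hP_nonneg : ∀ x y, 0 ≤ P x y)
    (hP_row : ∀ x, ∑ y, P x y = 1)
    (hpi_pos : ∀ x, 0 < pi x)
    (hpi_sum : ∑ x, pi x = 1)
    (hpi_stat : ∀ y, ∑ x, pi x * P x y = pi y)
    (D : Matrix X X ℝ)
    (hD : ∀ x y, D x y = Real.sqrt (pi x) * P x y / Real.sqrt (pi y))
    (v : X → ℝ) :
    Real.sqrt (∑ x, (∑ y, D x y * v y) ^ 2) ≤ Real.sqrt (∑ x, (v x) ^ 2) := by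
  apply Real.sqrt_le_sqrt
  -- pointwise Cauchy-Schwarz bound
  have key : ∀ x, (∑ y, D x y * v y) ^ 2 ≤ pi x * ∑ y, P x y * v y ^ 2 / pi y := by
    intro x
    have hcs := Finset.sum_mul_sq_le_sq_mul_sq Finset.univ
      (fun y => Real.sqrt (P x y)) (fun y => Real.sqrt (P x y) * (v y / Real.sqrt (pi y)))
    have h1 : ∀ y, Real.sqrt (P x y) * (Real.sqrt (P x y) * (v y / Real.sqrt (pi y)))
        = P x y * v y / Real.sqrt (pi y) := by
      intro y
      rw [← mul_assoc, Real.mul_self_sqrt (hP_nonneg x y)]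
      ring
    have h2 : ∀ y, Real.sqrt (P x y) ^ 2 = P x y := fun y => Real.sq_sqrt (hP_nonneg x y)
    have h3 : ∀ y, (Real.sqrt (P x y) * (v y / Real.sqrt (pi y))) ^ 2
        = P x y * v y ^ 2 / pi y := by
      intro y
      rw [mul_pow, h2, div_pow, Real.sq_sqrt (hpi_pos y).le]
      ring
    simp only [h1, h2, h3, hP_row x, one_mul] at hcs
    have hDx : (∑ y, D x y * v y) = Real.sqrt (pi x) * ∑ y, P x y * v y / Real.sqrt (pi y) := by
      rw [Finset.mul_sum]
      refine Finset.sum_congr rfl fun y _ => ?_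
      rw [hD]
      ring
    rw [hDx, mul_pow, Real.sq_sqrt (hpi_pos x).le]
    exact mul_le_mul_of_nonneg_left hcs (hpi_pos x).le
  calc ∑ x, (∑ y, D x y * v y) ^ 2
      ≤ ∑ x, pi x * ∑ y, P x y * v y ^ 2 / pi y :=
        Finset.sum_le_sum fun x _ => key x
    _ = ∑ y, (∑ x, pi x * P x y) * (v y ^ 2 / pi y) := by
        simp_rw [Finset.mul_sum, Finset.sum_mul]
        rw [Finset.sum_comm]
        exact Finset.sum_congr rfl fun y _ => Finset.sum_congr rfl fun x _ => by ring
    _ = ∑ y, (v y) ^ 2 := by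
        refine Finset.sum_congr rfl fun y _ => ?_
        rw [hpi_stat y]; field_simp; exact mul_div_cancel_left₀ _ (hpi_pos y).ne'
end

section
/- Suppose in addition that P is irreducible (for all x, y ∈ X there exists k ∈ ℕ with (P^k)_{xy} > 0) and that p_{xx} > 0 for every x ∈ X. If u, w : X → ℂ are unit vectors (Euclidean norm 1) satisfying Σ_{x,y} conj(u_x) · D(P)_{xy} · w_y = 1, then there exists a complex number c with |c| = 1 such that u_x = c·√(π_x) and w_x = c·√(π_x) for every x ∈ X. In particular the singular value 1 of D(P) has multiplicity one. -/
lemma pow_entry_nonneg {X : Type*} [Fintype X] [DecidableEq X] (P : Matrix X X ℝ)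
    (h : ∀ x y, 0 ≤ P x y) : ∀ (k : ℕ) x y, 0 ≤ (P ^ k) x y := by
  intro k
  induction k with
  | zero => intro x y; simp [Matrix.one_apply]; positivity
  | succ n ih =>
    intro x y
    rw [pow_succ, Matrix.mul_apply]
    exact Finset.sum_nonneg fun z _ => mul_nonneg (ih x z) (h z y)

lemma reach_lemma {X : Type*} [Fintype X] [DecidableEq X] (P : Matrix X X ℝ)
    (hnn : ∀ x y, 0 ≤ P x y) {α : Sort*} (g : X → α)
    (hg : ∀ a b, 0 < P a b → g a = g b) :
    ∀ (k : ℕ) (x y : X), 0 < (P ^ k) x y → g x = g y := by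
  intro k
  induction k with
  | zero =>
    intro x y hxy
    by_cases h : x = y
    · exact h ▸ rfl
    · simp [Matrix.one_apply, h] at hxy
  | succ n ih =>
    intro x y hxy
    rw [pow_succ, Matrix.mul_apply] at hxy
    obtain ⟨z, _, hz⟩ := Finset.exists_lt_of_sum_lt
      (by simpa using hxy : (∑ z : X, (0:ℝ)) < ∑ z, (P ^ n) x z * P z y)
    have h1 : (0:ℝ) < (P ^ n) x z * P z y := hz
    have hnz : 0 ≤ (P ^ n) x z := pow_entry_nonneg P hnn n x z
    have hzy : 0 ≤ P z y := hnn z y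
    have h2 : 0 < (P ^ n) x z := by
      rcases hnz.lt_or_eq with h | h
      · exact h
      · exfalso; rw [← h] at h1; simp at h1
    have h3 : 0 < P z y := by
      rcases hzy.lt_or_eq with h | h
      · exact h
      · exfalso; rw [← h] at h1; simp at h1
    exact (ih x z h2).trans (hg z y h3)

lemma re_eq_abs_imp {z : ℂ} (h : z.re = ‖z‖) : z = (‖z‖ : ℝ) := by
  have h2 : ‖z‖ ^ 2 = z.re ^ 2 + z.im ^ 2 := by
    rw [Complex.sq_norm, Complex.normSq_apply]; ring
  rw [← h] at h2
  have hsq : z.im ^ 2 = 0 := by linarith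
  have him : z.im = 0 := sq_eq_zero_iff.mp hsq
  rw [h] at h2
  apply Complex.ext <;> simp [h.symm, him]

/-- For an irreducible row-stochastic matrix `P` with `P x x > 0`
for all `x`, if unit vectors `u, w : X → ℂ` satisfy `∑ x y, conj (u x) * D x y * w y = 1`,
then there is a unimodular `c : ℂ` with `u x = c • √(π x)` and `w x = c • √(π x)` for all `x`. -/
theorem discriminant_singular_value_one_unique {X : Type*} [Fintype X] [DecidableEq X] [Nonempty X]
    (P : Matrix X X ℝ) (pi : X → ℝ)
    (hP_nonneg : ∀ x y, 0 ≤ P x y)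
    (hP_row : ∀ x, ∑ y, P x y = 1)
    (hpi_pos : ∀ x, 0 < pi x)
    (hpi_sum : ∑ x, pi x = 1)
    (hpi_stat : ∀ y, ∑ x, pi x * P x y = pi y)
    (D : Matrix X X ℝ)
    (hD : ∀ x y, D x y = Real.sqrt (pi x) * P x y / Real.sqrt (pi y))
    (hirr : ∀ x y, ∃ k : ℕ, 0 < (P ^ k) x y)
    (hloops : ∀ x, 0 < P x x)
    (u w : X → ℂ)
    (hu : ∑ x, ‖u x‖ ^ 2 = 1)
    (hw : ∑ x, ‖w x‖ ^ 2 = 1)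
    (h1 : ∑ x, ∑ y, (starRingEnd ℂ) (u x) * (D x y : ℂ) * w y = 1) :
    ∃ c : ℂ, ‖c‖ = 1 ∧
      ∀ x, u x = c * (Real.sqrt (pi x) : ℂ) ∧ w x = c * (Real.sqrt (pi x) : ℂ) := by
  set s : X → ℝ := fun x => Real.sqrt (pi x) with hs_def
  have hs : ∀ x, 0 < s x := fun x => Real.sqrt_pos.mpr (hpi_pos x)
  have hs2 : ∀ x, s x ^ 2 = pi x := fun x => Real.sq_sqrt (hpi_pos x).le
  set F : X → X → ℝ := fun x y => ((starRingEnd ℂ) (u x) * (D x y : ℂ) * w y).re with hF_def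
  set G : X → X → ℝ :=
    fun x y => (P x y * ‖u x‖ ^ 2 + pi x * P x y / pi y * ‖w y‖ ^ 2) / 2 with hG_def
  have hD_nonneg : ∀ x y, 0 ≤ D x y := by
    intro x y; rw [hD x y]
    have := hP_nonneg x y
    positivity
  have habs : ∀ x y, ‖(starRingEnd ℂ) (u x) * (D x y : ℂ) * w y‖
      = D x y * (‖u x‖ * ‖w y‖) := by
    intro x y
    rw [norm_mul, norm_mul, Complex.norm_conj, Complex.norm_real,
      Real.norm_of_nonneg (hD_nonneg x y)]
    ring
  have hFle : ∀ x y, F x y ≤ D x y * (‖u x‖ * ‖w y‖) := by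
    intro x y
    rw [← habs x y]
    exact Complex.re_le_norm _
  have hd : ∀ x y, D x y * s y = s x * P x y := by
    intro x y
    rw [hD x y]
    simp only [hs_def]
    exact div_mul_cancel₀ _ (Real.sqrt_pos.mpr (hpi_pos y)).ne'
  have hDG : ∀ x y, D x y * (‖u x‖ * ‖w y‖) ≤ G x y := by
    intro x y
    have hq : pi x * P x y / pi y * pi y = pi x * P x y :=
      div_mul_cancel₀ _ (hpi_pos y).ne'
    have key : 2 * (D x y * (‖u x‖ * ‖w y‖)) ≤
        P x y * ‖u x‖ ^ 2 + pi x * P x y / pi y * ‖w y‖ ^ 2 := by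
      rw [← mul_le_mul_iff_of_pos_right (hpi_pos y)]
      have eD : D x y * pi y = s x * P x y * s y := by
        rw [← hs2 y, sq, ← mul_assoc, hd x y]
      have hq2 : pi x * P x y / pi y * pi y * ‖w y‖ ^ 2 = pi x * P x y * ‖w y‖ ^ 2 := by
        rw [hq]
      have eD2 : D x y * pi y * (‖u x‖ * ‖w y‖) = s x * P x y * s y * (‖u x‖ * ‖w y‖) := by
        rw [eD]
      have hsx2 : pi x * P x y * ‖w y‖ ^ 2 = s x ^ 2 * P x y * ‖w y‖ ^ 2 := by rw [hs2 x]
      have hsy2 : P x y * ‖u x‖ ^ 2 * pi y = P x y * ‖u x‖ ^ 2 * s y ^ 2 := by rw [hs2 y]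
      nlinarith [mul_nonneg (hP_nonneg x y) (sq_nonneg (‖u x‖ * s y - s x * ‖w y‖)),
        hq2, eD2, hsx2, hsy2]
    simp only [hG_def]
    linarith
  have hle : ∀ x y, F x y ≤ G x y := fun x y => (hFle x y).trans (hDG x y)
  have hGsum : ∑ x, ∑ y, G x y = 1 := by
    have A : ∑ x, ∑ y, P x y * ‖u x‖ ^ 2 = 1 := by
      rw [← hu]
      refine Finset.sum_congr rfl fun x _ => ?_
      rw [← Finset.sum_mul, hP_row, one_mul]
    have B : ∑ x, ∑ y, pi x * P x y / pi y * ‖w y‖ ^ 2 = 1 := by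
      rw [Finset.sum_comm, ← hw]
      refine Finset.sum_congr rfl fun y _ => ?_
      have : ∀ x, pi x * P x y / pi y * ‖w y‖ ^ 2
          = pi x * P x y * (‖w y‖ ^ 2 / pi y) := fun x => by ring
      simp only [this]
      rw [← Finset.sum_mul, hpi_stat y, mul_comm, div_mul_cancel₀ _ (hpi_pos y).ne']
    have : ∑ x, ∑ y, G x y
        = ((∑ x, ∑ y, P x y * ‖u x‖ ^ 2) + ∑ x, ∑ y, pi x * P x y / pi y * ‖w y‖ ^ 2) / 2 := by
      simp only [hG_def, add_div, Finset.sum_add_distrib, Finset.sum_div]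
    rw [this, A, B]
    norm_num
  have hFsum : ∑ x, ∑ y, F x y = 1 := by
    have h2 : (∑ x, ∑ y, (starRingEnd ℂ) (u x) * (D x y : ℂ) * w y).re = 1 := by
      rw [h1]; rfl
    rw [Complex.re_sum] at h2
    calc ∑ x, ∑ y, F x y
        = ∑ x, (∑ y, (starRingEnd ℂ) (u x) * (D x y : ℂ) * w y).re :=
          Finset.sum_congr rfl fun x _ => (Complex.re_sum _ _).symm
      _ = 1 := h2
  have heq : ∀ x y, F x y = G x y := by
    have hprod : ∑ p : X × X, F p.1 p.2 = ∑ p : X × X, G p.1 p.2 := by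
      rw [Fintype.sum_prod_type, Fintype.sum_prod_type, hFsum, hGsum]
    have := (Finset.sum_eq_sum_iff_of_le (fun (p : X × X) _ => hle p.1 p.2)).mp hprod
    intro x y
    exact this (x, y) (Finset.mem_univ _)
  -- per-edge facts
  have edge2 : ∀ x y, 0 < P x y → ‖u x‖ * s y = s x * ‖w y‖ := by
    intro x y hp
    have e2 : D x y * (‖u x‖ * ‖w y‖) = G x y :=
      le_antisymm (hDG x y) ((heq x y) ▸ hFle x y)
    have e2' : s x * P x y / s y * (‖u x‖ * ‖w y‖)
        = (P x y * ‖u x‖ ^ 2 + s x ^ 2 * P x y / s y ^ 2 * ‖w y‖ ^ 2) / 2 := by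
      rw [← hD x y, hs2 x, hs2 y]
      exact e2
    have e4 : P x y * (‖u x‖ * s y - s x * ‖w y‖) ^ 2 = 0 := by
      have h1' := e2'
      field_simp [(hs x).ne', (hs y).ne'] at h1'
      have hle0 : P x y * (‖u x‖ * s y - s x * ‖w y‖) ^ 2 ≤ 0 := by
        nlinarith [h1', hs y, mul_pos (hs y) (hs y)]
      have hge0 : 0 ≤ P x y * (‖u x‖ * s y - s x * ‖w y‖) ^ 2 :=
        mul_nonneg (hP_nonneg x y) (sq_nonneg _)
      linarith
    have e5 : (‖u x‖ * s y - s x * ‖w y‖) ^ 2 = 0 :=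
      (mul_eq_zero.mp e4).resolve_left hp.ne'
    have := sq_eq_zero_iff.mp e5
    linarith
  have edge1 : ∀ x y, 0 < P x y →
      (starRingEnd ℂ) (u x) * w y = ((‖u x‖ * ‖w y‖ : ℝ) : ℂ) := by
    intro x y hp
    have hDpos : 0 < D x y := by
      rw [hD x y]
      have := hs x
      have := hs y
      positivity
    have e1 : F x y = D x y * (‖u x‖ * ‖w y‖) :=
      le_antisymm (hFle x y) (by rw [heq x y]; exact hDG x y)
    set z : ℂ := (starRingEnd ℂ) (u x) * w y with hz_def
    have hzabs : ‖z‖ = ‖u x‖ * ‖w y‖ := by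
      rw [hz_def, norm_mul, Complex.norm_conj]
    have hFz : F x y = D x y * z.re := by
      simp only [hF_def]
      have : (starRingEnd ℂ) (u x) * (D x y : ℂ) * w y = (D x y : ℂ) * z := by
        rw [hz_def]; ring
      rw [this]
      simp
    have hzre : z.re = ‖u x‖ * ‖w y‖ := by
      have := e1
      rw [hFz] at this
      exact mul_left_cancel₀ hDpos.ne' this
    have := re_eq_abs_imp (by rw [hzre, hzabs])
    rw [hzabs] at this
    exact this
  -- norms are equal pointwise
  have hab : ∀ x, ‖u x‖ = ‖w x‖ := by
    intro x
    have h2 := edge2 x x (hloops x)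
    rw [mul_comm (‖u x‖) (s x)] at h2
    exact mul_left_cancel₀ (hs x).ne' h2
  obtain ⟨x0⟩ := ‹Nonempty X›
  -- the ratio ‖u x‖ / s x is constant
  have hgf : ∀ a b, 0 < P a b → ‖u a‖ / s a = ‖u b‖ / s b := by
    intro a b hp
    have h2 := edge2 a b hp
    rw [← hab b] at h2
    rw [div_eq_div_iff (hs a).ne' (hs b).ne']
    linarith [h2]
  have hconst : ∀ x, ‖u x‖ / s x = ‖u x0‖ / s x0 := by
    intro x
    obtain ⟨k, hk⟩ := hirr x x0
    exact reach_lemma P hP_nonneg (fun x => ‖u x‖ / s x) hgf k x x0 hk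
  set t : ℝ := ‖u x0‖ / s x0 with ht_def
  have ht_nonneg : 0 ≤ t := div_nonneg (norm_nonneg _) (hs x0).le
  have hnu' : ∀ x, ‖u x‖ = t * s x := by
    intro x
    have h2 := hconst x
    rw [div_eq_iff (hs x).ne'] at h2
    rw [h2]
  have ht1 : t = 1 := by
    have : ∑ x, ‖u x‖ ^ 2 = t ^ 2 * ∑ x, pi x := by
      rw [Finset.mul_sum]
      refine Finset.sum_congr rfl fun x _ => ?_
      rw [hnu' x, mul_pow, hs2 x]
    rw [hu, hpi_sum, mul_one] at this
    have h3 : (t - 1) * (t + 1) = 0 := by linear_combination -this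
    rcases mul_eq_zero.mp h3 with h | h
    · linarith
    · linarith
  have hnu : ∀ x, ‖u x‖ = s x := fun x => by rw [hnu' x, ht1, one_mul]
  have hnw : ∀ x, ‖w x‖ = s x := fun x => by rw [← hab x, hnu x]
  have hune : ∀ x, u x ≠ 0 := fun x hx => by
    have := hnu x
    rw [hx, norm_zero] at this
    exact (hs x).ne this
  -- w = u pointwise
  have hwu : ∀ x, w x = u x := by
    intro x
    have h2 := edge1 x x (hloops x)
    have h3 : (starRingEnd ℂ) (u x) * u x = ((‖u x‖ * ‖u x‖ : ℝ) : ℂ) := by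
      rw [Complex.conj_mul']
      push_cast
      ring
    have : (starRingEnd ℂ) (u x) * w x = (starRingEnd ℂ) (u x) * u x := by
      rw [h2, h3, hab x]
    exact mul_left_cancel₀ (star_ne_zero.mpr (hune x)) this
  -- the phase is constant
  have hgg : ∀ a b, 0 < P a b → u a / (s a : ℂ) = u b / (s b : ℂ) := by
    intro a b hp
    have h2 := edge1 a b hp
    rw [hnu a, hnw b, hwu b] at h2
    have h3 : u a * ((starRingEnd ℂ) (u a) * u b) = u a * ((s a * s b : ℝ) : ℂ) := by
      rw [h2]
    have h4 : ((s a : ℂ) * s a) * u b = ((s a : ℂ) * s b) * u a := by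
      have h5 : u a * (starRingEnd ℂ) (u a) = ((s a : ℝ) ^ 2 : ℂ) := by
        rw [Complex.mul_conj, Complex.normSq_eq_norm_sq, hnu a]
        norm_cast
      calc ((s a : ℂ) * s a) * u b = (u a * (starRingEnd ℂ) (u a)) * u b := by
            rw [h5]; push_cast; ring
        _ = u a * ((starRingEnd ℂ) (u a) * u b) := by ring
        _ = u a * ((s a * s b : ℝ) : ℂ) := h3
        _ = ((s a : ℂ) * s b) * u a := by push_cast; ring
    have hsa : (s a : ℂ) ≠ 0 := by exact_mod_cast (hs a).ne'
    have hsb : (s b : ℂ) ≠ 0 := by exact_mod_cast (hs b).ne'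
    rw [div_eq_div_iff hsa hsb]
    have h6 : (s a : ℂ) * ((s a : ℂ) * u b) = (s a : ℂ) * ((s b : ℂ) * u a) := by
      rw [← mul_assoc, ← mul_assoc]; exact h4
    have h7 := mul_left_cancel₀ hsa h6
    linear_combination -h7
  have hgc : ∀ x, u x / (s x : ℂ) = u x0 / (s x0 : ℂ) := by
    intro x
    obtain ⟨k, hk⟩ := hirr x x0
    exact reach_lemma P hP_nonneg (fun x => u x / (s x : ℂ)) hgg k x x0 hk
  refine ⟨u x0 / (s x0 : ℂ), ?_, ?_⟩
  · rw [norm_div, Complex.norm_real, Real.norm_of_nonneg (hs x0).le, hnu x0]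
    exact div_self (hs x0).ne'
  · intro x
    have hsx : (s x : ℂ) ≠ 0 := by exact_mod_cast (hs x).ne'
    have h8 : u x = u x0 / (s x0 : ℂ) * (s x : ℂ) := by
      rw [← hgc x, div_mul_cancel₀ _ hsx]
    exact ⟨h8, by rw [hwu x]; exact h8⟩
end

section
/- If u, w : X → ℂ are unit vectors (Euclidean norm 1) satisfying Σ_{x,y} conj(u_x) · D(P)_{xy} · w_y = 1, then equality holds in the Cauchy–Schwarz step: for all x, y ∈ X, u_x · √(p_{xy}) = w_y · √(π_x · p_{xy} / π_y). In particular, u_x · √(π_y) = w_y · √(π_x) for every pair x, y with p_{xy} > 0. -/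
/-- If unit vectors `u, w : X → ℂ` satisfy
`∑ x y, conj (u x) * D x y * w y = 1`, then equality holds in the Cauchy–Schwarz step:
`u x * √(p x y) = w y * √(π x * p x y / π y)` for all `x, y`; in particular
`u x * √(π y) = w y * √(π x)` whenever `p x y > 0`. -/
theorem discriminant_cauchy_schwarz_equality {X : Type*} [Fintype X] [Nonempty X]
    (P : Matrix X X ℝ) (pi : X → ℝ)
    (hP_nonneg : ∀ x y, 0 ≤ P x y)
    (hP_row : ∀ x, ∑ y, P x y = 1)
    (hpi_pos : ∀ x, 0 < pi x)
    (hpi_sum : ∑ x, pi x = 1)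
    (hpi_stat : ∀ y, ∑ x, pi x * P x y = pi y)
    (D : Matrix X X ℝ)
    (hD : ∀ x y, D x y = Real.sqrt (pi x) * P x y / Real.sqrt (pi y))
    (u w : X → ℂ)
    (hu : ∑ x, ‖u x‖ ^ 2 = 1)
    (hw : ∑ x, ‖w x‖ ^ 2 = 1)
    (h1 : ∑ x, ∑ y, (starRingEnd ℂ) (u x) * (D x y : ℂ) * w y = 1) :
    (∀ x y, u x * (Real.sqrt (P x y) : ℂ) = w y * (Real.sqrt (pi x * P x y / pi y) : ℂ)) ∧
    (∀ x y, 0 < P x y → u x * (Real.sqrt (pi y) : ℂ) = w y * (Real.sqrt (pi x) : ℂ)) := by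
  have hq_nonneg : ∀ x y, 0 ≤ pi x * P x y / pi y := fun x y =>
    div_nonneg (mul_nonneg (hpi_pos x).le (hP_nonneg x y)) (hpi_pos y).le
  have hD_nonneg : ∀ x y, 0 ≤ D x y := fun x y => by
    rw [hD]
    exact div_nonneg (mul_nonneg (Real.sqrt_nonneg _) (hP_nonneg x y)) (Real.sqrt_nonneg _)
  -- product of square roots equals D
  have hcd : ∀ x y, Real.sqrt (P x y) * Real.sqrt (pi x * P x y / pi y) = D x y := by
    intro x y
    rw [← Real.sqrt_mul (hP_nonneg x y)]
    have : P x y * (pi x * P x y / pi y) = (D x y) ^ 2 := by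
      rw [hD, div_pow, mul_pow, Real.sq_sqrt (hpi_pos x).le, Real.sq_sqrt (hpi_pos y).le]
      field_simp
    rw [this, Real.sqrt_sq (hD_nonneg x y)]
  -- key: sum of squared norms of differences is zero
  have expand : ∀ x y,
      ‖u x * (Real.sqrt (P x y) : ℂ) - w y * (Real.sqrt (pi x * P x y / pi y) : ℂ)‖ ^ 2
      = ‖u x‖ ^ 2 * P x y + ‖w y‖ ^ 2 * (pi x * P x y / pi y)
        - 2 * ((starRingEnd ℂ) (u x) * (D x y : ℂ) * w y).re := by
    intro x y
    have hn : ∀ z : ℂ, ‖z‖ ^ 2 = Complex.normSq z := fun z => by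
      rw [Complex.sq_norm]
    rw [hn, Complex.normSq_sub]
    rw [Complex.normSq_mul, Complex.normSq_mul]
    rw [← hn (u x), ← hn (w y)]
    have h1 : Complex.normSq ((Real.sqrt (P x y) : ℂ)) = P x y := by
      rw [Complex.normSq_ofReal, Real.mul_self_sqrt (hP_nonneg x y)]
    have h2 : Complex.normSq ((Real.sqrt (pi x * P x y / pi y) : ℂ)) = pi x * P x y / pi y := by
      rw [Complex.normSq_ofReal, Real.mul_self_sqrt (hq_nonneg x y)]
    rw [h1, h2]
    have h3 : (u x * (Real.sqrt (P x y) : ℂ) *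
        (starRingEnd ℂ) (w y * (Real.sqrt (pi x * P x y / pi y) : ℂ))).re
        = ((starRingEnd ℂ) (u x) * (D x y : ℂ) * w y).re := by
      rw [map_mul, Complex.conj_ofReal]
      have : u x * (Real.sqrt (P x y) : ℂ) *
          ((starRingEnd ℂ) (w y) * (Real.sqrt (pi x * P x y / pi y) : ℂ))
          = ((D x y : ℂ)) * (u x * (starRingEnd ℂ) (w y)) := by
        rw [← hcd x y]
        push_cast
        ring
      rw [this]
      have h4 : ((starRingEnd ℂ) (u x) * (D x y : ℂ) * w y)
          = (starRingEnd ℂ) ((D x y : ℂ) * (u x * (starRingEnd ℂ) (w y))) := by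
        simp [map_mul, Complex.conj_conj, Complex.conj_ofReal]
        ring
      rw [h4, Complex.conj_re]
    rw [h3]
  have hsum : ∑ x, ∑ y,
      ‖u x * (Real.sqrt (P x y) : ℂ) - w y * (Real.sqrt (pi x * P x y / pi y) : ℂ)‖ ^ 2 = 0 := by
    have e1 : ∑ x, ∑ y, ‖u x‖ ^ 2 * P x y = 1 := by
      calc ∑ x, ∑ y, ‖u x‖ ^ 2 * P x y = ∑ x, ‖u x‖ ^ 2 * ∑ y, P x y := by
            simp [Finset.mul_sum]
        _ = 1 := by simp only [hP_row, mul_one]; exact hu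
    have e2 : ∑ x, ∑ y, ‖w y‖ ^ 2 * (pi x * P x y / pi y) = 1 := by
      rw [Finset.sum_comm]
      calc ∑ y, ∑ x, ‖w y‖ ^ 2 * (pi x * P x y / pi y)
          = ∑ y, ‖w y‖ ^ 2 * ((∑ x, pi x * P x y) / pi y) := by
            simp [Finset.mul_sum, Finset.sum_div, mul_div_assoc]
        _ = 1 := by
            have : ∀ y, ‖w y‖ ^ 2 * ((∑ x, pi x * P x y) / pi y) = ‖w y‖ ^ 2 := by
              intro y
              rw [hpi_stat y, div_self (hpi_pos y).ne', mul_one]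
            simp only [this]; exact hw
    have e3 : ∑ x, ∑ y, ((starRingEnd ℂ) (u x) * (D x y : ℂ) * w y).re = 1 := by
      have := congrArg Complex.re h1
      simpa [Complex.re_sum] using this
    calc ∑ x, ∑ y, ‖u x * (Real.sqrt (P x y) : ℂ) - w y * (Real.sqrt (pi x * P x y / pi y) : ℂ)‖ ^ 2
        = ∑ x, ∑ y, (‖u x‖ ^ 2 * P x y + ‖w y‖ ^ 2 * (pi x * P x y / pi y)
            - 2 * ((starRingEnd ℂ) (u x) * (D x y : ℂ) * w y).re) := by
          exact Finset.sum_congr rfl fun x _ => Finset.sum_congr rfl fun y _ => expand x y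
      _ = (∑ x, ∑ y, ‖u x‖ ^ 2 * P x y) + (∑ x, ∑ y, ‖w y‖ ^ 2 * (pi x * P x y / pi y))
            - 2 * ∑ x, ∑ y, ((starRingEnd ℂ) (u x) * (D x y : ℂ) * w y).re := by
          simp only [Finset.sum_sub_distrib, Finset.sum_add_distrib, Finset.mul_sum]
      _ = 0 := by rw [e1, e2, e3]; ring
  have key : ∀ x y, u x * (Real.sqrt (P x y) : ℂ) = w y * (Real.sqrt (pi x * P x y / pi y) : ℂ) := by
    intro x y
    have hterm : ‖u x * (Real.sqrt (P x y) : ℂ) - w y * (Real.sqrt (pi x * P x y / pi y) : ℂ)‖ ^ 2 = 0 := by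
      have hnn : ∀ a ∈ Finset.univ (α := X), 0 ≤ ∑ b, ‖u a * (Real.sqrt (P a b) : ℂ) - w b * (Real.sqrt (pi a * P a b / pi b) : ℂ)‖ ^ 2 :=
        fun a _ => Finset.sum_nonneg fun b _ => sq_nonneg _
      have h0 := (Finset.sum_eq_zero_iff_of_nonneg hnn).mp hsum x (Finset.mem_univ x)
      have hnn' : ∀ b ∈ Finset.univ (α := X), (0:ℝ) ≤ ‖u x * (Real.sqrt (P x b) : ℂ) - w b * (Real.sqrt (pi x * P x b / pi b) : ℂ)‖ ^ 2 :=
        fun b _ => sq_nonneg _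
      exact (Finset.sum_eq_zero_iff_of_nonneg hnn').mp h0 y (Finset.mem_univ y)
    have := pow_eq_zero_iff (n := 2) (by norm_num) |>.mp hterm
    rw [norm_eq_zero] at this
    exact sub_eq_zero.mp this
  refine ⟨key, fun x y hp => ?_⟩
  have hk := key x y
  have hsq : Real.sqrt (pi x * P x y / pi y)
      = Real.sqrt (pi x) * Real.sqrt (P x y) / Real.sqrt (pi y) := by
    rw [Real.sqrt_div (mul_nonneg (hpi_pos x).le (hP_nonneg x y)), Real.sqrt_mul (hpi_pos x).le]
  rw [hsq] at hk
  have hc : (Real.sqrt (P x y) : ℂ) ≠ 0 := by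
    exact_mod_cast (Real.sqrt_pos.mpr hp).ne'
  have hyc : (Real.sqrt (pi y) : ℂ) ≠ 0 := by
    exact_mod_cast (Real.sqrt_pos.mpr (hpi_pos y)).ne'
  apply mul_right_cancel₀ hc
  push_cast at hk ⊢
  rw [mul_right_comm, hk]
  field_simp
end

section
/- Suppose P is irreducible (for all x, y ∈ X there exists k ∈ ℕ with (P^k)_{xy} > 0). If u : X → ℂ satisfies u_x · √(π_y) = u_y · √(π_x) for every pair x, y ∈ X with p_{xy} > 0, then there exists c ∈ ℂ such that u_x = c·√(π_x) for every x ∈ X; that is, u is proportional to the vector (√(π_x))_{x∈X}. -/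
/-- For an irreducible row-stochastic matrix `P` with stationary
distribution `π`, any `u : X → ℂ` with `u x * √(π y) = u y * √(π x)` whenever
`P x y > 0` is proportional to the vector `(√(π x))ₓ`. -/
theorem proportional_of_local_relation {X : Type*} [Fintype X] [DecidableEq X] [Nonempty X]
    (P : Matrix X X ℝ) (pi : X → ℝ)
    (hP_nonneg : ∀ x y, 0 ≤ P x y)
    (hP_row : ∀ x, ∑ y, P x y = 1)
    (hpi_pos : ∀ x, 0 < pi x)
    (hpi_sum : ∑ x, pi x = 1)
    (hpi_stat : ∀ y, ∑ x, pi x * P x y = pi y)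
    (hirr : ∀ x y, ∃ k : ℕ, 0 < (P ^ k) x y)
    (u : X → ℂ)
    (hu : ∀ x y, 0 < P x y → u x * (Real.sqrt (pi y) : ℂ) = u y * (Real.sqrt (pi x) : ℂ)) :
    ∃ c : ℂ, ∀ x, u x = c * (Real.sqrt (pi x) : ℂ) := by
  set v : X → ℂ := fun x => u x / (Real.sqrt (pi x) : ℂ) with hv
  have hsqrt_ne : ∀ x, (Real.sqrt (pi x) : ℂ) ≠ 0 := by
    intro x
    exact_mod_cast Complex.ofReal_ne_zero.mpr (ne_of_gt (Real.sqrt_pos.mpr (hpi_pos x)))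
  have hstep : ∀ x y, 0 < P x y → v x = v y := by
    intro x y h
    have := hu x y h
    show u x / _ = u y / _
    rw [div_eq_div_iff (hsqrt_ne x) (hsqrt_ne y)]
    exact this
  have hpow_nonneg : ∀ k : ℕ, ∀ x y, 0 ≤ (P ^ k) x y := by
    intro k
    induction k with
    | zero => intro x y; simp [Matrix.one_apply]; positivity
    | succ n ih =>
      intro x y
      rw [pow_succ, Matrix.mul_apply]
      exact Finset.sum_nonneg fun z _ => mul_nonneg (ih x z) (hP_nonneg z y)
  have hpath : ∀ k : ℕ, ∀ x y, 0 < (P ^ k) x y → v x = v y := by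
    intro k
    induction k with
    | zero =>
      intro x y h
      simp [Matrix.one_apply] at h
      by_cases hxy : x = y
      · rw [hxy]
      · simp [hxy] at h
    | succ n ih =>
      intro x y h
      rw [pow_succ, Matrix.mul_apply] at h
      obtain ⟨z, _, hz⟩ := Finset.exists_lt_of_sum_lt (by simpa using h : ∑ z : X, (0:ℝ) < ∑ z, (P ^ n) x z * P z y)
      have h1 : 0 < (P ^ n) x z := by
        rcases lt_or_eq_of_le (hpow_nonneg n x z) with h' | h'
        · exact h'
        · exfalso; rw [← h'] at hz; simp at hz
      have h2 : 0 < P z y := by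
        rcases lt_or_eq_of_le (hP_nonneg z y) with h' | h'
        · exact h'
        · exfalso; rw [← h'] at hz; simp at hz
      exact (ih x z h1).trans (hstep z y h2)
  obtain ⟨x0⟩ := ‹Nonempty X›
  refine ⟨v x0, fun x => ?_⟩
  obtain ⟨k, hk⟩ := hirr x0 x
  have : v x0 = v x := hpath k x0 x hk
  rw [this, hv]
  show u x = u x / _ * _
  rw [div_mul_cancel₀ _ (hsqrt_ne x)]
end

section
/- Let a ∈ A and b ∈ B be unit vectors and let θ ∈ (0, π/2) be such that the orthogonal projections satisfy Π_A b = cos θ · a and Π_B a = cos θ · b (a matched pair of singular vectors with singular value cos θ ∈ (0,1)). Then the vector a − e^{iθ}·b is nonzero and is an eigenvector of W = ref(B) ∘ ref(A) with eigenvalue e^{2iθ}: (ref(B) ∘ ref(A))(a − e^{iθ}·b) = e^{2iθ}·(a − e^{iθ}·b). In particular e^{2iθ} is an eigenvalue of W with nonzero imaginary part. -/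
open Complex

/-- For a matched pair of singular vectors `a ∈ A`, `b ∈ B` with
singular value `cos θ`, `θ ∈ (0, π/2)`, the vector `a − e^{iθ}·b` is a nonzero
eigenvector of `W = ref(B) ∘ ref(A)` with eigenvalue `e^{2iθ}`. -/
theorem quantum_walk_eigenvector {H : Type*} [NormedAddCommGroup H] [InnerProductSpace ℂ H]
    (A B : Submodule ℂ H) [Submodule.HasOrthogonalProjection A] [Submodule.HasOrthogonalProjection B]
    (a b : H) (ha : a ∈ A) (hb : b ∈ B) (hna : ‖a‖ = 1) (hnb : ‖b‖ = 1)
    (θ : ℝ) (hθ : θ ∈ Set.Ioo 0 (Real.pi / 2))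
    (hPA : (Submodule.orthogonalProjectionOnto A b : H) = (Real.cos θ : ℂ) • a)
    (hPB : (Submodule.orthogonalProjectionOnto B a : H) = (Real.cos θ : ℂ) • b) :
    a - Complex.exp (θ * Complex.I) • b ≠ 0 ∧
      Submodule.reflection B (Submodule.reflection A (a - Complex.exp (θ * Complex.I) • b)) =
        Complex.exp (2 * θ * Complex.I) • (a - Complex.exp (θ * Complex.I) • b) := by
  obtain ⟨hθ0, hθ1⟩ := hθ
  have hPa : (Submodule.orthogonalProjectionOnto A a : H) = a := Submodule.starProjection_eq_self_iff.mpr ha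
  have hPb : (Submodule.orthogonalProjectionOnto B b : H) = b := Submodule.starProjection_eq_self_iff.mpr hb
  have hb0 : b ≠ 0 := by intro h; rw [h, norm_zero] at hnb; norm_num at hnb
  constructor
  · intro h
    have hab : a = Complex.exp (θ * Complex.I) • b := by
      rwa [sub_eq_zero] at h
    have := hPB
    rw [hab, map_smul] at this
    simp only [Submodule.coe_smul] at this
    rw [hPb] at this
    have hcoef : Complex.exp (θ * Complex.I) = (Real.cos θ : ℂ) := by
      have := sub_eq_zero.mpr this
      rw [← sub_smul] at this
      rcases smul_eq_zero.mp this with h' | h'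
      · exact sub_eq_zero.mp h'
      · exact absurd h' hb0
    have him : (Complex.exp (θ * Complex.I)).im = 0 := by rw [hcoef]; simp
    rw [Complex.exp_mul_I] at him
    simp [Complex.add_im, Complex.cos_ofReal_im, Complex.sin_ofReal_re] at him
    have : Real.sin θ > 0 := Real.sin_pos_of_pos_of_lt_pi hθ0
      (lt_trans hθ1 (by linarith [Real.pi_pos]))
    linarith
  · have key1 : Submodule.reflection A (a - Complex.exp (θ * Complex.I) • b) =
        (1 - 2 * Complex.exp (θ * Complex.I) * (Real.cos θ : ℂ)) • a
          + Complex.exp (θ * Complex.I) • b := by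
      rw [Submodule.reflection_apply, Submodule.starProjection_apply, map_sub, map_smul]
      push_cast [hPa, hPA]
      module
    rw [key1]
    rw [Submodule.reflection_apply, Submodule.starProjection_apply, map_add, map_smul, map_smul]
    push_cast [hPb, hPB]
    have hc : Complex.cos (θ : ℂ) = (Complex.exp (θ * Complex.I)
        + (Complex.exp (θ * Complex.I))⁻¹) / 2 := by
      rw [← Complex.exp_neg, Complex.cos]
      ring_nf
    have h2 : Complex.exp (2 * θ * Complex.I) =
        Complex.exp (θ * Complex.I) * Complex.exp (θ * Complex.I) := by
      rw [← Complex.exp_add]; ring_nf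
    have hne : Complex.exp (θ * Complex.I) ≠ 0 := Complex.exp_ne_zero _
    rw [hc, h2]
    match_scalars <;> field_simp <;> ring
end

section
/- Let μ ∈ M and ν ∈ M^⊥ be unit vectors, let θ ∈ ℝ, and set φ = (sin θ)·μ + (cos θ)·ν. Then the perfect amplitude amplification step triples the angle: (2⟨φ,·⟩φ − Id)((Id − 2Π_M) φ) = (sin 3θ)·μ + (cos 3θ)·ν, where 2⟨φ,·⟩φ − Id denotes the map x ↦ 2⟨φ, x⟩·φ − x (reflection through the line spanned by φ). -/
/-- The perfect amplitude amplification step triples the angle: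
with `φ = sin θ·μ + cos θ·ν` (`μ ∈ M`, `ν ∈ Mᗮ` unit vectors),
`ref(φ)((Id − 2Π_M) φ) = sin 3θ·μ + cos 3θ·ν`. -/
theorem amplitude_amplification_triples_angle {H : Type*} [NormedAddCommGroup H]
    [InnerProductSpace ℂ H]
    (M : Submodule ℂ H) [M.HasOrthogonalProjection]
    (μ ν : H) (hμ : μ ∈ M) (hν : ν ∈ Mᗮ) (hμ1 : ‖μ‖ = 1) (hν1 : ‖ν‖ = 1)
    (θ : ℝ) (f : H)
    (hf : f = (Real.sin θ : ℂ) • μ + (Real.cos θ : ℂ) • ν)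
    (g : H) (hg : g = f - (2 : ℂ) • (M.orthogonalProjectionOnto f : H)) :
    (2 * (inner ℂ f g : ℂ)) • f - g =
      (Real.sin (3 * θ) : ℂ) • μ + (Real.cos (3 * θ) : ℂ) • ν := by
  have hμμ : (inner ℂ μ μ : ℂ) = 1 := by
    rw [inner_self_eq_norm_sq_to_K, hμ1]; norm_num
  have hνν : (inner ℂ ν ν : ℂ) = 1 := by
    rw [inner_self_eq_norm_sq_to_K, hν1]; norm_num
  have hμν : (inner ℂ μ ν : ℂ) = 0 := (hν μ hμ)
  have hνμ : (inner ℂ ν μ : ℂ) = 0 := by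
    rw [← inner_conj_symm, hμν, map_zero]
  have hproj : (M.orthogonalProjectionOnto f : H) = (Real.sin θ : ℂ) • μ := by
    rw [hf, map_add, map_smul, map_smul]
    push_cast
    rw [(M.orthogonalProjectionOnto_mem_subspace_eq_self ⟨μ, hμ⟩ :
        M.orthogonalProjectionOnto μ = ⟨μ, hμ⟩),
      Submodule.orthogonalProjectionOnto_apply_of_mem_orthogonal hν]
    simp
  have hg' : g = (-(Real.sin θ : ℂ)) • μ + (Real.cos θ : ℂ) • ν := by
    rw [hg, hproj, hf]
    rw [smul_smul]
    module
  have hinner : (inner ℂ f g : ℂ) = (Real.cos (2 * θ) : ℂ) := by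
    have h1 : (inner ℂ f g : ℂ) = ((Real.cos θ ^ 2 - Real.sin θ ^ 2 : ℝ) : ℂ) := by
      rw [hf, hg']
      simp only [inner_add_left, inner_add_right,
        inner_smul_left, inner_smul_right, hμμ, hνν, hμν, hνμ]
      simp only [Complex.conj_ofReal]
      norm_cast
      ring
    rw [h1, ← Real.cos_two_mul']
  rw [hinner, hf, hg']
  have hs : (Real.sin (3 * θ) : ℂ) = 2 * Real.cos (2 * θ) * Real.sin θ + Real.sin θ := by
    have : Real.sin (3 * θ) = 2 * Real.cos (2 * θ) * Real.sin θ + Real.sin θ := by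
      have h3 : 3 * θ = 2 * θ + θ := by ring
      rw [Real.sin_three_mul, Real.cos_two_mul, Real.cos_sq']
      ring
    exact_mod_cast congrArg Complex.ofReal this
  have hc : (Real.cos (3 * θ) : ℂ) = 2 * Real.cos (2 * θ) * Real.cos θ - Real.cos θ := by
    have : Real.cos (3 * θ) = 2 * Real.cos (2 * θ) * Real.cos θ - Real.cos θ := by
      have h3 : 3 * θ = 2 * θ + θ := by ring
      rw [Real.cos_three_mul, Real.cos_two_mul]
      ring
    exact_mod_cast congrArg Complex.ofReal this
  rw [hs, hc]
  module
end

section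
/- Let φ₀ > 0 and γ > 0, set φ̄_i = 3^i·φ₀, and β_i = (18/(4π³))·γ/i² for i ≥ 1. Define ẽ_0 = 0 and ẽ_{i+1} = 4β_{i+1}·φ̄_i + 3ẽ_i. Then for every i ≥ 0, ẽ_i ≤ (γ/π)·3^i·φ₀. (The proof uses Σ_{j≥1} 1/j² = π²/6, so that the normalized errors u_i = ẽ_i/(γ·φ̄_i) satisfy u_i = (4/(3γ))·Σ_{j=1}^i β_j ≤ 1/π.) -/
/-- With `φ̄_i = 3^i·φ₀` and `β_i = (18/(4π³))·γ/i²`, the majorant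
errors `ẽ_0 = 0`, `ẽ_{i+1} = 4β_{i+1}·φ̄_i + 3ẽ_i` satisfy `ẽ_i ≤ (γ/π)·3^i·φ₀`. -/
theorem majorant_error_bound (φ₀ γ : ℝ) (hφ₀ : 0 < φ₀) (hγ : 0 < γ)
    (et : ℕ → ℝ) (h0 : et 0 = 0)
    (hrec : ∀ i : ℕ, et (i + 1) =
      4 * (18 / (4 * Real.pi ^ 3) * γ / ((i : ℝ) + 1) ^ 2) * ((3 : ℝ) ^ i * φ₀)
        + 3 * et i) :
    ∀ i : ℕ, et i ≤ γ / Real.pi * ((3 : ℝ) ^ i * φ₀) := by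
  have hπ := Real.pi_pos
  have heq : ∀ i : ℕ, et i =
      6 * γ / Real.pi ^ 3 * (∑ j ∈ Finset.range i, 1 / ((j : ℝ) + 1) ^ 2)
        * ((3 : ℝ) ^ i * φ₀) := by
    intro i
    induction i with
    | zero => simp [h0]
    | succ n ih =>
      rw [hrec n, ih, Finset.sum_range_succ]
      field_simp
      ring
  intro i
  rw [heq i]
  have hsum : (∑ j ∈ Finset.range i, 1 / ((j : ℝ) + 1) ^ 2) ≤ Real.pi ^ 2 / 6 := by
    have h := hasSum_zeta_two
    have h2 : HasSum (fun n : ℕ => (1 : ℝ) / ((n : ℝ) + 1) ^ 2) (Real.pi ^ 2 / 6) := by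
      have := (hasSum_nat_add_iff' 1).mpr h
      simpa using this
    exact (Summable.sum_le_tsum (Finset.range i) (fun j _ => by positivity) h2.summable).trans_eq h2.tsum_eq
  have hfac : 0 < (3 : ℝ) ^ i * φ₀ := by positivity
  have : 6 * γ / Real.pi ^ 3 * (∑ j ∈ Finset.range i, 1 / ((j : ℝ) + 1) ^ 2)
      ≤ 6 * γ / Real.pi ^ 3 * (Real.pi ^ 2 / 6) := by
    apply mul_le_mul_of_nonneg_left hsum (by positivity)
  calc 6 * γ / Real.pi ^ 3 * (∑ j ∈ Finset.range i, 1 / ((j : ℝ) + 1) ^ 2) * ((3 : ℝ) ^ i * φ₀)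
      ≤ 6 * γ / Real.pi ^ 3 * (Real.pi ^ 2 / 6) * ((3 : ℝ) ^ i * φ₀) :=
        mul_le_mul_of_nonneg_right this hfac.le
    _ = γ / Real.pi * ((3 : ℝ) ^ i * φ₀) := by field_simp
end

section
/- Let μ and ν be orthonormal vectors in H, let φ ∈ ℝ, and set π_φ = (sin φ)·μ + (cos φ)·ν. Let R_ν = 2⟨ν,·⟩ν − Id and R_π = 2⟨π_φ,·⟩π_φ − Id be the reflections through the lines spanned by ν and by π_φ, and let G = R_π ∘ R_ν. Then for every natural number n, G^n(π_φ) = (sin((2n+1)φ))·μ + (cos((2n+1)φ))·ν; i.e., each Grover iteration rotates the state by angle 2φ in the plane spanned by μ and ν. -/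
/-- Each Grover iteration `G = ref(π_φ) ∘ ref(ν)` rotates the state
by angle `2φ` in the plane spanned by the orthonormal vectors `μ` and `ν`:
`G^n(π_φ) = sin((2n+1)φ)·μ + cos((2n+1)φ)·ν`. -/
theorem grover_rotation {H : Type*} [NormedAddCommGroup H] [InnerProductSpace ℂ H]
    (μ ν : H) (hμ1 : ‖μ‖ = 1) (hν1 : ‖ν‖ = 1) (horth : (inner ℂ μ ν : ℂ) = 0)
    (φ : ℝ) (p : H)
    (hp : p = (Real.sin φ : ℂ) • μ + (Real.cos φ : ℂ) • ν)
    (G : H → H)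
    (hG : ∀ x : H, G x =
      (2 * (inner ℂ p ((2 * (inner ℂ ν x : ℂ)) • ν - x) : ℂ)) • p -
        ((2 * (inner ℂ ν x : ℂ)) • ν - x)) :
    ∀ n : ℕ, G^[n] p =
      (Real.sin ((2 * n + 1) * φ) : ℂ) • μ + (Real.cos ((2 * n + 1) * φ) : ℂ) • ν := by
  have hμμ : (inner ℂ μ μ : ℂ) = 1 := by
    rw [inner_self_eq_norm_sq_to_K, hμ1]; norm_num
  have hνν : (inner ℂ ν ν : ℂ) = 1 := by
    rw [inner_self_eq_norm_sq_to_K, hν1]; norm_num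
  have hνμ : (inner ℂ ν μ : ℂ) = 0 := by
    rw [← inner_conj_symm, horth]; simp
  have key : ∀ θ : ℝ, G ((Real.sin θ : ℂ) • μ + (Real.cos θ : ℂ) • ν) =
      (Real.sin (θ + 2*φ) : ℂ) • μ + (Real.cos (θ + 2*φ) : ℂ) • ν := by
    intro θ
    rw [hG, hp]
    simp only [inner_add_right, inner_smul_right, inner_sub_right, inner_smul_left, inner_add_left,
      hμμ, hνν, hνμ, horth, mul_zero, zero_add, add_zero, mul_one, map_ofNat,
      Complex.conj_ofReal]
    match_scalars <;>
      simp only [Complex.sin_add, Complex.cos_add, Complex.sin_two_mul, Complex.cos_two_mul]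
    · linear_combination (-2 * Complex.sin (θ:ℂ)) * Complex.sin_sq_add_cos_sq (φ:ℂ)
    · ring
  intro n
  induction n with
  | zero => simpa using hp
  | succ n ih =>
      rw [Function.iterate_succ_apply', ih, key]
      push_cast
      ring_nf
end
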